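/- arXiv:1703.05997 — 2 statements merged into one kernel-verified Lean document; each statement's English description precedes it below -/
import Mathlib

section
/- Let connections be processed in order of nondecreasing departure time, and suppose processing a connection c only ever assigns to tentative arrival times values that are at least c's departure time, and can only decrease tentative values. Then once the tentative arrival time S[t] of the target satisfies S[t] ≤ c_dep_time for the current connection c, S[t] is never changed by processing any subsequent connection. (Correctness of the stopping criterion.) -/
/-- Correctness of the stopping criterion: connections are processed in order of
nondecreasing departure time (`dep k` is the departure time of the connection processed
in step `k+1`... here `dep (k+1)` is the departure time of step `k+1`), tentative arrival
times of the target only decrease, and any newly assigned value in step `k+1` is at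
least `dep (k+1)`.  Once `S k ≤ dep (k+1)`, the tentative arrival time never changes. -/
theorem stmt_6 (dep S : ℕ → ℝ) (hdep : Monotone dep)
    (hdec : ∀ k, S (k + 1) ≤ S k)
    (hnew : ∀ k, S (k + 1) < S k → dep (k + 1) ≤ S (k + 1))
    (k : ℕ) (hstop : S k ≤ dep (k + 1)) :
    ∀ j, k ≤ j → S j = S k := by
  intro j hj
  induction j with
  | zero => exact (Nat.le_zero.mp hj) ▸ rfl
  | succ n ih =>
    rcases Nat.lt_or_ge k (n + 1) with h | h
    · have hkn : k ≤ n := Nat.lt_succ_iff.mp h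
      have hn : S n = S k := ih hkn
      by_contra hne
      have hlt : S (n + 1) < S n := lt_of_le_of_ne (hdec n) (hn ▸ hne)
      have h1 : dep (n + 1) ≤ S (n + 1) := hnew n hlt
      have h2 : dep (k + 1) ≤ dep (n + 1) := hdep (by omega)
      linarith
    · have : k = n + 1 := le_antisymm hj h
      rw [this]
end

section
/- No connection departing strictly before the source time τ can be part of any journey departing at or after τ: for every journey j with j_dep_time ≥ τ, every leg l of j satisfies l_enter_dep_time ≥ τ. (Correctness of the starting criterion.) -/
/-- A connection: a train driving from one stop to another without intermediate halt. -/
structure Connection where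
  depStop : ℕ
  arrStop : ℕ
  depTime : ℝ
  arrTime : ℝ
  trip : ℕ

/-- A leg of a journey: a pair of connections (enter, exit) of the same trip. -/
structure Leg where
  enter : Connection
  exit : Connection

/-- Correctness of the starting criterion: in a valid journey departing no earlier than
the source time `τ`, every leg's enter connection departs no earlier than `τ`. -/
theorem stmt_7 (k : ℕ) (hk : 0 < k) (legs : ℕ → Leg) (fdur : ℕ → ℝ) (τ : ℝ)
    (hfpos : ∀ i, i ≤ k → 0 < fdur i)
    (hleg : ∀ i, i < k → (legs i).enter.depTime < (legs i).exit.arrTime)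
    (htransfer : ∀ i, i + 1 < k →
      (legs i).exit.arrTime + fdur (i + 1) ≤ (legs (i + 1)).enter.depTime)
    (hdep : τ ≤ (legs 0).enter.depTime - fdur 0) :
    ∀ i, i < k → τ ≤ (legs i).enter.depTime := by
  intro i
  induction i with
  | zero =>
    intro _
    have h0 := hfpos 0 (Nat.zero_le k)
    linarith
  | succ n ih =>
    intro hlt
    have hn : n < k := Nat.lt_of_succ_lt hlt
    have h1 := ih hn
    have h2 := hleg n hn
    have h3 := htransfer n hlt
    have h4 := hfpos (n + 1) (le_of_lt hlt)
    linarith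
end
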